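/- arXiv:1411.6669 — 3 statements merged into one kernel-verified Lean document; each statement's English description precedes it below -/
import Mathlib

section
/- For a random variable X with Gaussian distribution N(-σ²/2, σ²), the expectation of min(1, exp(X)) equals 2·Φ(-σ/2), where Φ is the standard normal CDF. -/
open MeasureTheory ProbabilityTheory

/-- The standard normal cumulative distribution function. -/
noncomputable def stdNormCDF (x : ℝ) : ℝ := ((gaussianReal 0 1) (Set.Iic x)).toReal

/-- For `X ~ N(-σ²/2, σ²)`, `E[min(1, exp X)] = 2 Φ(-σ/2)`. -/
theorem expectation_metropolis_accept (σ : ℝ) (hσ : 0 < σ) :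
    ∫ x, min 1 (Real.exp x) ∂(gaussianReal (-σ ^ 2 / 2) ((σ ^ 2).toNNReal)) =
      2 * stdNormCDF (-σ / 2) := by
  have hσne : σ ≠ 0 := hσ.ne'
  set v : NNReal := (σ ^ 2).toNNReal with hvdef
  have hσ2 : (v : ℝ) = σ ^ 2 := Real.coe_toNNReal _ (sq_nonneg σ)
  have hvne : v ≠ 0 := by
    intro h
    have : (v : ℝ) = 0 := by rw [h]; simp
    rw [hσ2] at this
    exact (pow_pos hσ 2).ne' this
  -- the affine map of the standard gaussian
  have hv1 : (⟨σ ^ 2, sq_nonneg σ⟩ : NNReal) * 1 = v := by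
    ext
    simp [hσ2]
  have hmap : ∀ m : ℝ, Measure.map (fun x => σ * x + m) (gaussianReal 0 1)
      = gaussianReal m v := by
    intro m
    have h1 := gaussianReal_map_const_mul (μ := 0) (v := 1) σ
    calc Measure.map (fun x => σ * x + m) (gaussianReal 0 1)
        = Measure.map (· + m) (Measure.map (σ * ·) (gaussianReal 0 1)) :=
          (Measure.map_map (measurable_add_const m) (measurable_const_mul σ)).symm
      _ = gaussianReal m v := by
          rw [h1, show NNReal.mk (σ ^ 2) (sq_nonneg σ) * 1 = v from hv1, gaussianReal_map_add_const, mul_zero, zero_add]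
  have hmeas_aff : ∀ m : ℝ, Measurable (fun x : ℝ => σ * x + m) :=
    fun m => (measurable_const_mul σ).add_const m
  have hIic : ∀ m a : ℝ, gaussianReal m v (Set.Iic a)
      = gaussianReal 0 1 (Set.Iic ((a - m) / σ)) := by
    intro m a
    rw [← hmap m, Measure.map_apply (hmeas_aff m) measurableSet_Iic]
    congr 1
    ext x
    simp only [Set.mem_preimage, Set.mem_Iic]
    rw [le_div_iff₀ hσ]
    constructor <;> intro h <;> nlinarith [mul_comm x σ]
  have hIoi : ∀ m a : ℝ, gaussianReal m v (Set.Ioi a)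
      = gaussianReal 0 1 (Set.Ioi ((a - m) / σ)) := by
    intro m a
    rw [← hmap m, Measure.map_apply (hmeas_aff m) measurableSet_Ioi]
    congr 1
    ext x
    simp only [Set.mem_preimage, Set.mem_Ioi]
    rw [div_lt_iff₀ hσ]
    constructor <;> intro h <;> nlinarith [mul_comm x σ]
  -- symmetry of the standard gaussian
  have hsymm : Measure.map (fun x : ℝ => (-1) * x) (gaussianReal 0 1) = gaussianReal 0 1 := by
    rw [gaussianReal_map_const_mul]
    norm_num
  have hsing : ∀ a : ℝ, gaussianReal 0 1 {a} = 0 := fun a =>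
    (gaussianReal_absolutelyContinuous 0 one_ne_zero) (by simp)
  have hflip : ∀ a : ℝ, gaussianReal 0 1 (Set.Iic (-a)) = gaussianReal 0 1 (Set.Ioi a) := by
    intro a
    have h1 : gaussianReal 0 1 (Set.Iic (-a)) = gaussianReal 0 1 (Set.Ici a) := by
      conv_lhs => rw [← hsymm]
      rw [Measure.map_apply (measurable_const_mul _) measurableSet_Iic]
      congr 1
      ext x
      simp only [Set.mem_preimage, Set.mem_Iic, Set.mem_Ici]
      constructor <;> intro h <;> linarith
    rw [h1]
    refine le_antisymm ?_ (measure_mono Set.Ioi_subset_Ici_self)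
    rw [← Set.Ioi_union_left]
    refine (measure_union_le _ _).trans ?_
    rw [hsing a, add_zero]
  -- split the integral
  have hint : Integrable (fun x => min 1 (Real.exp x)) (gaussianReal (-σ ^ 2 / 2) v) := by
    refine Integrable.mono' (integrable_const 1)
      ((measurable_const.min Real.measurable_exp).aestronglyMeasurable) ?_
    refine Filter.Eventually.of_forall fun x => ?_
    rw [Real.norm_eq_abs, abs_of_nonneg (le_min zero_le_one (Real.exp_pos x).le)]
    exact min_le_left _ _
  rw [← integral_add_compl (measurableSet_Iic (a := (0:ℝ))) hint, Set.compl_Iic]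
  have hpart2 : ∫ x in Set.Ioi (0:ℝ), min 1 (Real.exp x)
        ∂(gaussianReal (-σ ^ 2 / 2) v)
      = ((gaussianReal 0 1) (Set.Iic (-σ / 2))).toReal := by
    rw [setIntegral_congr_fun measurableSet_Ioi
      (g := fun _ => (1:ℝ)) (fun x hx => min_eq_left (Real.one_le_exp (le_of_lt hx)))]
    rw [setIntegral_const, smul_eq_mul, mul_one, measureReal_def, hIoi]
    have h1 : (0 - -σ ^ 2 / 2) / σ = σ / 2 := by rw [div_eq_iff hσne]; ring
    have h2 : -(σ / 2) = -σ / 2 := by ring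
    rw [h1, ← hflip (σ / 2), h2]
  have hdens : ∀ x : ℝ, (gaussianPDFReal (-σ ^ 2 / 2) v x).toNNReal • Real.exp x
      = gaussianPDFReal (σ ^ 2 / 2) v x := by
    intro x
    rw [NNReal.smul_def, Real.coe_toNNReal _ (gaussianPDFReal_nonneg _ _ _), smul_eq_mul]
    simp only [gaussianPDFReal, hσ2, mul_assoc, ← Real.exp_add]
    congr 2
    have h2 : (2:ℝ) * σ ^ 2 ≠ 0 := by positivity
    field_simp
    ring
  have hpart1 : ∫ x in Set.Iic (0:ℝ), min 1 (Real.exp x)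
        ∂(gaussianReal (-σ ^ 2 / 2) v)
      = ((gaussianReal 0 1) (Set.Iic (-σ / 2))).toReal := by
    rw [setIntegral_congr_fun measurableSet_Iic
      (g := fun x => Real.exp x) (fun x hx => min_eq_right (Real.exp_le_one_iff.mpr hx))]
    rw [gaussianReal_of_var_ne_zero _ hvne, restrict_withDensity measurableSet_Iic]
    have hpdf : gaussianPDF (-σ ^ 2 / 2) v
        = fun x => ((gaussianPDFReal (-σ ^ 2 / 2) v x).toNNReal : ENNReal) := rfl
    rw [hpdf, integral_withDensity_eq_integral_smul
      ((measurable_gaussianPDFReal _ _).real_toNNReal) Real.exp]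
    rw [setIntegral_congr_fun measurableSet_Iic
      (g := fun x => gaussianPDFReal (σ ^ 2 / 2) v x) (fun x _ => hdens x)]
    have h0 : (0 - σ ^ 2 / 2) / σ = -σ / 2 := by rw [div_eq_iff hσne]; ring
    have := gaussianReal_apply_eq_integral (σ ^ 2 / 2) hvne (Set.Iic (0:ℝ))
    rw [hIic, h0] at this
    rw [← ENNReal.toReal_ofReal (integral_nonneg fun x => gaussianPDFReal_nonneg _ _ _),
      ← this]
  rw [hpart1, hpart2, stdNormCDF]
  ring
end

section
/- For the harmonic oscillator with q,p independent standard normals, G(q,p)=(2q²-p²)/24, H=(q²+p²)/2, and rotation flow Φ_τ, the combination 2·E[G²/H] - E[G·(G∘Φ_τ)] equals (1 - cos 2τ)/64. -/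
open MeasureTheory ProbabilityTheory Real Set Filter
open scoped ENNReal NNReal

lemma gauss_prod_eq :
    (gaussianReal 0 1).prod (gaussianReal 0 1) =
      (volume : Measure (ℝ × ℝ)).withDensity
        (fun z => ENNReal.ofReal (gaussianPDFReal 0 1 z.1 * gaussianPDFReal 0 1 z.2)) := by
  refine Measure.prod_eq fun s t hs ht => ?_
  rw [withDensity_apply _ (hs.prod ht), Measure.volume_eq_prod, ← Measure.prod_restrict]
  have h : ∀ z : ℝ × ℝ, ENNReal.ofReal (gaussianPDFReal 0 1 z.1 * gaussianPDFReal 0 1 z.2)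
      = gaussianPDF 0 1 z.1 * gaussianPDF 0 1 z.2 :=
    fun z => ENNReal.ofReal_mul (gaussianPDFReal_nonneg _ _ _)
  simp_rw [h]
  rw [lintegral_prod_mul ((measurable_gaussianPDF 0 1).aemeasurable)
    ((measurable_gaussianPDF 0 1).aemeasurable)]
  rw [gaussianReal_of_var_ne_zero 0 one_ne_zero, withDensity_apply _ hs, withDensity_apply _ ht]

lemma integral_gauss_prod (f : ℝ × ℝ → ℝ) :
    ∫ z, f z ∂((gaussianReal 0 1).prod (gaussianReal 0 1)) =
    ∫ z : ℝ × ℝ, (gaussianPDFReal 0 1 z.1 * gaussianPDFReal 0 1 z.2) * f z := by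
  rw [gauss_prod_eq]
  have hm : Measurable fun z : ℝ × ℝ =>
      (gaussianPDFReal 0 1 z.1 * gaussianPDFReal 0 1 z.2).toNNReal :=
    (((measurable_gaussianPDFReal 0 1).comp measurable_fst).mul
      ((measurable_gaussianPDFReal 0 1).comp measurable_snd)).real_toNNReal
  rw [show (fun z : ℝ × ℝ => ENNReal.ofReal (gaussianPDFReal 0 1 z.1 * gaussianPDFReal 0 1 z.2))
      = fun z => ((gaussianPDFReal 0 1 z.1 * gaussianPDFReal 0 1 z.2).toNNReal : ℝ≥0∞) from rfl,
    integral_withDensity_eq_integral_smul hm]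
  congr 2
  ext z
  rw [NNReal.smul_def, smul_eq_mul, Real.coe_toNNReal _
    (mul_nonneg (gaussianPDFReal_nonneg _ _ _) (gaussianPDFReal_nonneg _ _ _))]

lemma pdf_polar (r θ : ℝ) :
    gaussianPDFReal 0 1 (r * cos θ) * gaussianPDFReal 0 1 (r * sin θ)
      = (2 * π)⁻¹ * Real.exp (-(r ^ 2) / 2) := by
  simp only [gaussianPDFReal, NNReal.coe_one, mul_one, sub_zero]
  rw [show (Real.sqrt (2 * π))⁻¹ * Real.exp (-(r * cos θ) ^ 2 / 2) *
      ((Real.sqrt (2 * π))⁻¹ * Real.exp (-(r * sin θ) ^ 2 / 2)) =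
      (Real.sqrt (2 * π) * Real.sqrt (2 * π))⁻¹ *
        (Real.exp (-(r * cos θ) ^ 2 / 2) * Real.exp (-(r * sin θ) ^ 2 / 2)) by
    rw [mul_inv]; ring]
  rw [Real.mul_self_sqrt (by positivity), ← Real.exp_add]
  congr 2
  linear_combination (-(r ^ 2) / 2) * sin_sq_add_cos_sq θ


lemma tendsto_poly_exp (c₄ c₂ c₀ : ℝ) :
    Tendsto (fun r : ℝ => -((c₄ * r ^ 4 + c₂ * r ^ 2 + c₀) * Real.exp (-(r ^ 2) / 2)))
      atTop (nhds 0) := by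
  have h : ∀ r : ℝ, -((c₄ * r ^ 4 + c₂ * r ^ 2 + c₀) * Real.exp (-(r ^ 2) / 2))
      = -(4 * c₄ * ((r ^ 2 / 2) ^ 2 * Real.exp (-(r ^ 2 / 2)))
          + 2 * c₂ * ((r ^ 2 / 2) ^ 1 * Real.exp (-(r ^ 2 / 2)))
          + c₀ * Real.exp (-(r ^ 2 / 2))) := by
    intro r
    rw [show -(r ^ 2) / 2 = -(r ^ 2 / 2) by ring]
    ring
  simp_rw [h]
  have hsq : Tendsto (fun r : ℝ => r ^ 2 / 2) atTop atTop :=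
    (tendsto_pow_atTop two_ne_zero).atTop_div_const two_pos
  have t1 : Tendsto (fun u : ℝ => u ^ 2 * Real.exp (-u)) atTop (nhds 0) :=
    tendsto_pow_mul_exp_neg_atTop_nhds_zero 2
  have t2 : Tendsto (fun u : ℝ => u ^ 1 * Real.exp (-u)) atTop (nhds 0) :=
    tendsto_pow_mul_exp_neg_atTop_nhds_zero 1
  have t3 : Tendsto (fun u : ℝ => Real.exp (-u)) atTop (nhds 0) := by
    simpa using Real.tendsto_exp_comp_nhds_zero.mpr tendsto_neg_atTop_atBot
  have := (((t1.comp hsq).const_mul (4 * c₄)).add ((t2.comp hsq).const_mul (2 * c₂))).add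
    ((t3.comp hsq).const_mul c₀)
  simpa using this.neg

lemma integrableOn_pow_exp (n : ℕ) :
    IntegrableOn (fun r : ℝ => r ^ n * Real.exp (-(r ^ 2) / 2)) (Ioi 0) := by
  have h := integrableOn_rpow_mul_exp_neg_mul_sq (b := 1/2) (by norm_num) (s := n)
    (lt_of_lt_of_le neg_one_lt_zero (Nat.cast_nonneg n))
  refine h.congr_fun (fun x hx => ?_) measurableSet_Ioi
  dsimp only
  rw [Real.rpow_natCast]
  ring_nf

lemma radial3 : ∫ r in Ioi (0:ℝ), r ^ 3 * Real.exp (-(r ^ 2) / 2) = 2 := by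
  have hder : ∀ r : ℝ, HasDerivAt (fun r : ℝ =>
      -((0 * r ^ 4 + 1 * r ^ 2 + 2) * Real.exp (-(r ^ 2) / 2)))
      (r ^ 3 * Real.exp (-(r ^ 2) / 2)) r := by
    intro r
    have h1 : HasDerivAt (fun r : ℝ => -(r ^ 2) / 2) (-r) r := by
      have := (hasDerivAt_pow 2 r).neg.div_const 2
      convert this using 1
      · rfl
      · rfl
      · rfl
      ring
    have h2 : HasDerivAt (fun r : ℝ => Real.exp (-(r ^ 2) / 2))
        (Real.exp (-(r ^ 2) / 2) * -r) r := h1.exp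
    have h3 : HasDerivAt (fun r : ℝ => 0 * r ^ 4 + 1 * r ^ 2 + 2) (2 * r) r := by
      have := (hasDerivAt_pow 2 r).add_const (2 : ℝ)
      convert this using 1
      · rfl
      · rfl
      · funext x; ring
      · norm_num
    have h4 := ((h3.mul h2)).neg
    convert h4 using 1
    · rfl
    · rfl
    · rfl
    ring
  have := integral_Ioi_of_hasDerivAt_of_tendsto' (f' := fun r => r ^ 3 * Real.exp (-(r ^ 2) / 2))
    (fun x _ => hder x) (integrableOn_pow_exp 3) (tendsto_poly_exp 0 1 2)
  rw [this]
  norm_num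

lemma radial5 : ∫ r in Ioi (0:ℝ), r ^ 5 * Real.exp (-(r ^ 2) / 2) = 8 := by
  have hder : ∀ r : ℝ, HasDerivAt (fun r : ℝ =>
      -((1 * r ^ 4 + 4 * r ^ 2 + 8) * Real.exp (-(r ^ 2) / 2)))
      (r ^ 5 * Real.exp (-(r ^ 2) / 2)) r := by
    intro r
    have h1 : HasDerivAt (fun r : ℝ => -(r ^ 2) / 2) (-r) r := by
      have := (hasDerivAt_pow 2 r).neg.div_const 2
      convert this using 1
      · rfl
      · rfl
      · rfl
      ring
    have h2 : HasDerivAt (fun r : ℝ => Real.exp (-(r ^ 2) / 2))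
        (Real.exp (-(r ^ 2) / 2) * -r) r := h1.exp
    have h3 : HasDerivAt (fun r : ℝ => 1 * r ^ 4 + 4 * r ^ 2 + 8)
        (1 * (4 * r ^ 3) + 4 * (2 * r)) r := by
      have := (((hasDerivAt_pow 4 r).add ((hasDerivAt_pow 2 r).const_mul 4)).add_const (8 : ℝ))
      convert this using 1
      · rfl
      · rfl
      · funext x; simp only [Pi.add_apply]; ring
      · norm_num
    have h4 := ((h3.mul h2)).neg
    convert h4 using 1
    · rfl
    · rfl
    · rfl
    ring
  have := integral_Ioi_of_hasDerivAt_of_tendsto' (f' := fun r => r ^ 5 * Real.exp (-(r ^ 2) / 2))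
    (fun x _ => hder x) (integrableOn_pow_exp 5) (tendsto_poly_exp 1 4 8)
  rw [this]
  norm_num


lemma angle1 : ∫ θ in Ioo (-π) π, (2 * cos θ ^ 2 - sin θ ^ 2) ^ 2 = 11 * π / 4 := by
  have hle : (-π : ℝ) ≤ π := by linarith [pi_pos]
  rw [← integral_Ioc_eq_integral_Ioo, ← intervalIntegral.integral_of_le hle]
  have hder : ∀ θ : ℝ, HasDerivAt (fun θ : ℝ =>
      11 * θ / 8 + 3 / 2 * (cos θ * sin θ)
        + 9 / 8 * (cos θ * sin θ * (cos θ ^ 2 - sin θ ^ 2)))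
      ((2 * cos θ ^ 2 - sin θ ^ 2) ^ 2) θ := by
    intro θ
    have hc := Real.hasDerivAt_cos θ
    have hs := Real.hasDerivAt_sin θ
    have H := ((((hasDerivAt_id θ).const_mul (11:ℝ)).div_const 8).add
      ((hc.mul hs).const_mul ((3:ℝ)/2))).add
      (((hc.mul hs).mul ((hc.pow 2).sub (hs.pow 2))).const_mul ((9:ℝ)/8))
    convert H using 1
    · rfl
    · rfl
    · rfl
    simp only [Pi.mul_apply, Pi.pow_apply, Pi.sub_apply]
    linear_combination ((-(1:ℝ)/8) * sin θ ^ 2 + 23/8 * cos θ ^ 2 + 11/8) * sin_sq_add_cos_sq θ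
  rw [intervalIntegral.integral_eq_sub_of_hasDerivAt (fun x _ => hder x)
    ((Continuous.intervalIntegrable (by fun_prop) _ _))]
  simp [Real.sin_pi, Real.cos_pi]
  ring

lemma angle2 (τ : ℝ) : ∫ θ in Ioo (-π) π, (2 * cos θ ^ 2 - sin θ ^ 2) *
    (2 * (cos τ * cos θ + sin τ * sin θ) ^ 2 - (-sin τ * cos θ + cos τ * sin θ) ^ 2)
    = π * (2 + 9 * (cos τ ^ 2 - sin τ ^ 2)) / 4 := by
  have hle : (-π : ℝ) ≤ π := by linarith [pi_pos]
  rw [← integral_Ioc_eq_integral_Ioo, ← intervalIntegral.integral_of_le hle]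
  set a := cos τ with ha
  set b := sin τ with hb
  have hder : ∀ θ : ℝ, HasDerivAt (fun θ : ℝ =>
      (1 + 9 / 2 * (a ^ 2 - b ^ 2)) * θ / 4
        + (3 / 4) * (cos θ * sin θ)
        + (3 / 4 * (a ^ 2 - b ^ 2)) * (cos θ * sin θ)
        - (3 / 4 * (a * b)) * (cos θ ^ 2 - sin θ ^ 2)
        + (9 / 8 * (a ^ 2 - b ^ 2)) * (cos θ * sin θ * (cos θ ^ 2 - sin θ ^ 2))
        - (9 / 16 * (a * b)) * ((cos θ ^ 2 - sin θ ^ 2) ^ 2 - 4 * (cos θ * sin θ) ^ 2))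
      ((2 * cos θ ^ 2 - sin θ ^ 2) *
        (2 * (a * cos θ + b * sin θ) ^ 2 - (-b * cos θ + a * sin θ) ^ 2)) θ := by
    intro θ
    have hc := Real.hasDerivAt_cos θ
    have hs := Real.hasDerivAt_sin θ
    have p1 := ((hasDerivAt_id θ).const_mul (1 + 9 / 2 * (a ^ 2 - b ^ 2))).div_const 4
    have H := ((((p1.add ((hc.mul hs).const_mul ((3:ℝ)/4))).add
      ((hc.mul hs).const_mul (3 / 4 * (a ^ 2 - b ^ 2)))).sub
      (((hc.pow 2).sub (hs.pow 2)).const_mul (3 / 4 * (a * b)))).add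
      (((hc.mul hs).mul ((hc.pow 2).sub (hs.pow 2))).const_mul
        (9 / 8 * (a ^ 2 - b ^ 2)))).sub
      (((((hc.pow 2).sub (hs.pow 2)).pow 2).sub
        (((hc.mul hs).pow 2).const_mul (4:ℝ))).const_mul (9 / 16 * (a * b)))
    convert H using 1
    · rfl
    · rfl
    · rfl
    simp only [Pi.mul_apply, Pi.pow_apply, Pi.sub_apply]
    linear_combination
      (3/4 + 23/8 * cos θ ^ 2 * a ^ 2 - 1/8 * sin θ ^ 2 * a ^ 2 - 7/8 * cos θ ^ 2 * b ^ 2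
        - 7/8 * sin θ ^ 2 * b ^ 2 + 3 * cos θ * sin θ * a * b + 5/8 * a ^ 2 - 13/8 * b ^ 2)
        * sin_sq_add_cos_sq θ
      + (-(1:ℝ)/2 + 3/2 * cos θ ^ 2) * sin_sq_add_cos_sq τ
  rw [intervalIntegral.integral_eq_sub_of_hasDerivAt (fun x _ => hder x)
    ((Continuous.intervalIntegrable (by fun_prop) _ _))]
  simp [Real.sin_pi, Real.cos_pi]
  ring

lemma I1 : ∫ z : ℝ × ℝ, ((2 * z.1 ^ 2 - z.2 ^ 2) / 24) ^ 2 / ((z.1 ^ 2 + z.2 ^ 2) / 2)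
    ∂((gaussianReal 0 1).prod (gaussianReal 0 1)) = 11 / 1152 := by
  rw [integral_gauss_prod]
  rw [← integral_comp_polarCoord_symm (fun z : ℝ × ℝ =>
    (gaussianPDFReal 0 1 z.1 * gaussianPDFReal 0 1 z.2) *
      (((2 * z.1 ^ 2 - z.2 ^ 2) / 24) ^ 2 / ((z.1 ^ 2 + z.2 ^ 2) / 2)))]
  rw [polarCoord_target]
  rw [setIntegral_congr_fun (measurableSet_Ioi.prod measurableSet_Ioo)
    (show EqOn _ (fun p : ℝ × ℝ => (p.1 ^ 3 * Real.exp (-(p.1 ^ 2) / 2)) *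
      (((2 * π)⁻¹ / 288) * (2 * cos p.2 ^ 2 - sin p.2 ^ 2) ^ 2)) _ from ?_)]
  · rw [Measure.volume_eq_prod,
      setIntegral_prod_mul (fun r : ℝ => r ^ 3 * Real.exp (-(r ^ 2) / 2))
        (fun θ : ℝ => ((2 * π)⁻¹ / 288) * (2 * cos θ ^ 2 - sin θ ^ 2) ^ 2)
        (Ioi 0) (Ioo (-π) π),
      radial3, MeasureTheory.integral_const_mul, angle1]
    field_simp
    ring
  · intro p hp
    have hr : (0:ℝ) < p.1 := hp.1
    have hr' : p.1 ≠ 0 := ne_of_gt hr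
    simp only [polarCoord_symm_apply, smul_eq_mul]
    rw [pdf_polar]
    have hd : (p.1 * cos p.2) ^ 2 + (p.1 * sin p.2) ^ 2 = p.1 ^ 2 := by
      linear_combination p.1 ^ 2 * sin_sq_add_cos_sq p.2
    rw [hd]
    field_simp
    ring

lemma I2 (τ : ℝ) : ∫ z : ℝ × ℝ,
    ((2 * z.1 ^ 2 - z.2 ^ 2) / 24) *
      ((2 * (Real.cos τ * z.1 + Real.sin τ * z.2) ^ 2
        - (-Real.sin τ * z.1 + Real.cos τ * z.2) ^ 2) / 24)
    ∂((gaussianReal 0 1).prod (gaussianReal 0 1))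
    = (2 + 9 * (cos τ ^ 2 - sin τ ^ 2)) / 576 := by
  rw [integral_gauss_prod]
  rw [← integral_comp_polarCoord_symm (fun z : ℝ × ℝ =>
    (gaussianPDFReal 0 1 z.1 * gaussianPDFReal 0 1 z.2) *
      (((2 * z.1 ^ 2 - z.2 ^ 2) / 24) *
        ((2 * (Real.cos τ * z.1 + Real.sin τ * z.2) ^ 2
          - (-Real.sin τ * z.1 + Real.cos τ * z.2) ^ 2) / 24)))]
  rw [polarCoord_target]
  rw [setIntegral_congr_fun (measurableSet_Ioi.prod measurableSet_Ioo)
    (show EqOn _ (fun p : ℝ × ℝ => (p.1 ^ 5 * Real.exp (-(p.1 ^ 2) / 2)) *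
      (((2 * π)⁻¹ / 576) * ((2 * cos p.2 ^ 2 - sin p.2 ^ 2) *
        (2 * (cos τ * cos p.2 + sin τ * sin p.2) ^ 2
          - (-sin τ * cos p.2 + cos τ * sin p.2) ^ 2)))) _ from ?_)]
  · rw [Measure.volume_eq_prod,
      setIntegral_prod_mul (fun r : ℝ => r ^ 5 * Real.exp (-(r ^ 2) / 2))
        (fun θ : ℝ => ((2 * π)⁻¹ / 576) * ((2 * cos θ ^ 2 - sin θ ^ 2) *
          (2 * (cos τ * cos θ + sin τ * sin θ) ^ 2
            - (-sin τ * cos θ + cos τ * sin θ) ^ 2)))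
        (Ioi 0) (Ioo (-π) π),
      radial5, MeasureTheory.integral_const_mul, angle2]
    field_simp
    ring
  · intro p hp
    simp only [polarCoord_symm_apply, smul_eq_mul]
    rw [pdf_polar]
    field_simp
    ring

/-- For the harmonic oscillator with `q, p` independent standard normals,
`2 E[G²/H] - E[G · (G ∘ Φ_τ)] = (1 - cos 2τ)/64`. -/
theorem harmonic_oscillator_average_error_coefficient (τ : ℝ) :
    2 * (∫ z : ℝ × ℝ, ((2 * z.1 ^ 2 - z.2 ^ 2) / 24) ^ 2 / ((z.1 ^ 2 + z.2 ^ 2) / 2)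
          ∂((gaussianReal 0 1).prod (gaussianReal 0 1)))
      - (∫ z : ℝ × ℝ,
          ((2 * z.1 ^ 2 - z.2 ^ 2) / 24) *
            ((2 * (Real.cos τ * z.1 + Real.sin τ * z.2) ^ 2
              - (-Real.sin τ * z.1 + Real.cos τ * z.2) ^ 2) / 24)
          ∂((gaussianReal 0 1).prod (gaussianReal 0 1))) =
      (1 - Real.cos (2 * τ)) / 64 := by
  rw [I1, I2, Real.cos_two_mul]
  linear_combination (1 / 64 : ℝ) * sin_sq_add_cos_sq τ
end

section
/- If the cumulants of a family of random variables satisfy the recursion κ_n = μ_n - ∑_{m=1}^{n-1} C(n-1, m-1) κ_m μ_{n-m}, and the moments satisfy μ_n = O(ε^{k(n+1)}) for n odd and μ_n = O(ε^{kn}) for n even as ε → 0, then the cumulants satisfy the same scaling: κ_n = O(ε^{k(n+1)}) for n odd and κ_n = O(ε^{kn}) for n even. -/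
open Filter Asymptotics Finset

private lemma pow_isBigO_pow_of_le {a b : ℕ} (hab : b ≤ a) :
    (fun ε : ℝ => ε ^ a) =O[nhdsWithin 0 (Set.Ioi 0)] fun ε : ℝ => ε ^ b := by
  apply IsBigO.of_bound 1
  filter_upwards [self_mem_nhdsWithin,
    nhdsWithin_le_nhds (Metric.ball_mem_nhds (0 : ℝ) one_pos)] with ε hε hball
  have hε0 : (0 : ℝ) < ε := hε
  have hε1 : ε ≤ 1 := by
    have : |ε| < 1 := by simpa [Real.dist_eq] using hball
    linarith [le_abs_self ε]
  have h := pow_le_pow_of_le_one hε0.le hε1 hab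
  rw [Real.norm_eq_abs, Real.norm_eq_abs,
    abs_of_nonneg (pow_nonneg hε0.le a), abs_of_nonneg (pow_nonneg hε0.le b)]
  linarith

/-- If the cumulants satisfy the moment-cumulant recursion
`κ_n = μ_n - ∑_{m=1}^{n-1} C(n-1, m-1) κ_m μ_{n-m}` and the moments satisfy
`μ_n = O(ε^{k(n+1)})` for odd `n` and `μ_n = O(ε^{kn})` for even `n`,
then the cumulants satisfy the same scaling. -/
theorem cumulant_scaling_from_moment_scaling (k : ℕ) (hk : 1 ≤ k)
    (μ κ : ℕ → ℝ → ℝ)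
    (hrec : ∀ n : ℕ, 1 ≤ n → ∀ ε : ℝ, κ n ε =
      μ n ε - ∑ m ∈ Finset.Icc 1 (n - 1), ((n - 1).choose (m - 1) : ℝ) * κ m ε * μ (n - m) ε)
    (hμodd : ∀ n : ℕ, 1 ≤ n → Odd n →
      (fun ε => μ n ε) =O[nhdsWithin 0 (Set.Ioi 0)] fun ε : ℝ => ε ^ (k * (n + 1)))
    (hμeven : ∀ n : ℕ, 1 ≤ n → Even n →
      (fun ε => μ n ε) =O[nhdsWithin 0 (Set.Ioi 0)] fun ε : ℝ => ε ^ (k * n)) :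
    (∀ n : ℕ, 1 ≤ n → Odd n →
      (fun ε => κ n ε) =O[nhdsWithin 0 (Set.Ioi 0)] fun ε : ℝ => ε ^ (k * (n + 1))) ∧
    (∀ n : ℕ, 1 ≤ n → Even n →
      (fun ε => κ n ε) =O[nhdsWithin 0 (Set.Ioi 0)] fun ε : ℝ => ε ^ (k * n)) := by
  -- unified weight: w n = n + n % 2
  have hμ : ∀ n : ℕ, 1 ≤ n →
      (fun ε => μ n ε) =O[nhdsWithin 0 (Set.Ioi 0)] fun ε : ℝ => ε ^ (k * (n + n % 2)) := by
    intro n hn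
    rcases Nat.even_or_odd n with he | ho
    · have : n % 2 = 0 := Nat.even_iff.mp he
      simpa [this] using hμeven n hn he
    · have : n % 2 = 1 := Nat.odd_iff.mp ho
      simpa [this] using hμodd n hn ho
  have key : ∀ n : ℕ, 1 ≤ n →
      (fun ε => κ n ε) =O[nhdsWithin 0 (Set.Ioi 0)] fun ε : ℝ => ε ^ (k * (n + n % 2)) := by
    intro n
    induction n using Nat.strong_induction_on with
    | _ n IH =>
      intro hn
      have heq : (fun ε => κ n ε) = fun ε => μ n ε -
          ∑ m ∈ Finset.Icc 1 (n - 1), ((n - 1).choose (m - 1) : ℝ) * κ m ε * μ (n - m) ε := by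
        funext ε; exact hrec n hn ε
      rw [heq]
      apply IsBigO.sub (hμ n hn)
      have hsum : (fun ε => ∑ m ∈ Finset.Icc 1 (n - 1),
          ((n - 1).choose (m - 1) : ℝ) * κ m ε * μ (n - m) ε)
          =O[nhdsWithin 0 (Set.Ioi 0)] fun ε : ℝ => ε ^ (k * (n + n % 2)) := by
        apply Asymptotics.IsBigO.fun_sum
        intro m hm
        have hm1 : 1 ≤ m := (Finset.mem_Icc.mp hm).1
        have hm2 : m ≤ n - 1 := (Finset.mem_Icc.mp hm).2
        have hmn : m < n := by omega
        have h1 : 1 ≤ n - m := by omega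
        have hκm := IH m hmn hm1
        have hμnm := hμ (n - m) h1
        have hprod := hκm.mul hμnm
        have hpow : (fun ε : ℝ => ε ^ (k * (m + m % 2)) * ε ^ (k * ((n - m) + (n - m) % 2)))
            = fun ε : ℝ => ε ^ (k * (m + m % 2) + k * ((n - m) + (n - m) % 2)) := by
          funext ε; rw [← pow_add]
        rw [hpow] at hprod
        have hle : k * (n + n % 2) ≤ k * (m + m % 2) + k * ((n - m) + (n - m) % 2) := by
          rw [← Nat.mul_add]
          apply Nat.mul_le_mul_left
          omega
        calc (fun ε => ((n - 1).choose (m - 1) : ℝ) * κ m ε * μ (n - m) ε)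
            =O[nhdsWithin 0 (Set.Ioi 0)]
              (fun ε : ℝ => ε ^ (k * (m + m % 2) + k * ((n - m) + (n - m) % 2))) := by
                simpa [mul_assoc] using hprod.const_mul_left ((n - 1).choose (m - 1) : ℝ)
          _ =O[nhdsWithin 0 (Set.Ioi 0)] fun ε : ℝ => ε ^ (k * (n + n % 2)) :=
              pow_isBigO_pow_of_le hle
      exact hsum
  constructor
  · intro n hn ho
    have : n % 2 = 1 := Nat.odd_iff.mp ho
    simpa [this] using key n hn
  · intro n hn he
    have : n % 2 = 0 := Nat.even_iff.mp he
    simpa [this] using key n hn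
end
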